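/- Let w(k) = (k+1)^{−α} with α > 0. For the generalized Pólya urn with b(i) = w(2i+1), r(i) = w(2i), the conditional drift satisfies: given 𝔅_i and ℜ_i with i = 𝔅_i + ℜ_i ≥ 1 and 𝔇_i = ℜ_i − 𝔅_i, one has ((2𝔅_i+2)^α − (2ℜ_i+1)^α)/((2𝔅_i+2)^α + (2ℜ_i+1)^α) = −α𝔇_i/i + ε_i where |ε_i| ≤ C(𝔇_i² + i)/i² for a constant C depending only on α, uniformly over all i ≥ 1 and all 𝔇_i with |𝔇_i| ≤ i/2. -/

import Mathlib

lemma tanh_aux (t M : ℝ) (hM : 0 ≤ M) (ht : |t| ≤ M) :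
    |(Real.exp (2*t) - 1)/(Real.exp (2*t) + 1) - t| ≤ (12 + 4*M) * t^2 := by
  have hexp : 0 < Real.exp (2*t) := Real.exp_pos _
  have hden : (0:ℝ) < Real.exp (2*t) + 1 := by positivity
  have habs := abs_le.mp ht
  rcases le_or_gt |t| (1/2) with h | h
  · have habs2 := abs_le.mp h
    have h2 : |2*t| ≤ 1 := by
      rw [abs_mul, abs_two]; linarith
    have hE := Real.abs_exp_sub_one_sub_id_le h2
    have hEabs := abs_le.mp hE
    have hrw : (Real.exp (2*t) - 1)/(Real.exp (2*t) + 1) - t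
        = ((Real.exp (2*t) - 1 - 2*t)*(1 - t) - 2*t^2)/(Real.exp (2*t) + 1) := by
      field_simp
      ring
    rw [hrw, abs_div, abs_of_pos hden]
    have hnum : |(Real.exp (2*t) - 1 - 2*t)*(1 - t) - 2*t^2| ≤ 8*t^2 := by
      rw [abs_le]
      constructor
      · nlinarith [sq_nonneg t, sq_nonneg (2*t)]
      · nlinarith [sq_nonneg t, sq_nonneg (2*t)]
    have hd1 : (1:ℝ) ≤ Real.exp (2*t) + 1 := by linarith
    calc |(Real.exp (2*t) - 1 - 2*t)*(1 - t) - 2*t^2| / (Real.exp (2*t) + 1)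
        ≤ (8*t^2) / 1 := by
          apply div_le_div₀ (by positivity) hnum one_pos hd1
      _ ≤ (12 + 4*M) * t^2 := by nlinarith [sq_nonneg t]
  · have hf : |(Real.exp (2*t) - 1)/(Real.exp (2*t) + 1)| ≤ 1 := by
      rw [abs_div, abs_of_pos hden, div_le_one hden, abs_le]
      constructor <;> nlinarith
    have ht2 : (1:ℝ)/4 < t^2 := by nlinarith [abs_nonneg t, sq_abs t]
    calc |(Real.exp (2*t) - 1)/(Real.exp (2*t) + 1) - t|
        ≤ |(Real.exp (2*t) - 1)/(Real.exp (2*t) + 1)| + |t| := abs_sub _ _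
      _ ≤ 1 + M := by linarith
      _ ≤ (12 + 4*M) * t^2 := by nlinarith

lemma log_aux (z : ℝ) (h1 : 1/3 ≤ z) : |Real.log z - (z-1)| ≤ 3*(z-1)^2 := by
  have hz : 0 < z := by linarith
  have h2 : Real.log z ≤ z - 1 := Real.log_le_sub_one_of_pos hz
  have h3 : 1 - 1/z ≤ Real.log z := by
    have h4 := Real.log_le_sub_one_of_pos (show (0:ℝ) < 1/z by positivity)
    rw [one_div, Real.log_inv] at h4
    have : 1/z = z⁻¹ := (one_div z)
    linarith [this ▸ h4]
  rw [abs_le]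
  constructor
  · have h5 : 1 - 1/z - (z-1) = -((z-1)^2/z) := by field_simp; ring
    have h6 : (z-1)^2 / z ≤ 3*(z-1)^2 := by
      rw [div_le_iff₀ hz]; nlinarith [sq_nonneg (z-1)]
    nlinarith
  · nlinarith [sq_nonneg (z-1)]

lemma log_lb (z : ℝ) (hz : 0 < z) : 1 - 1/z ≤ Real.log z := by
  have h4 := Real.log_le_sub_one_of_pos (show (0:ℝ) < z⁻¹ by positivity)
  rw [Real.log_inv] at h4
  have h5 : z⁻¹ = 1/z := (one_div z).symm
  linarith [h5 ▸ h4]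

set_option maxHeartbeats 2000000 in
/-- Drift expansion for the polynomially self-repelling urn: there is `C = C(α)` such
that for all `i ≥ 1` and all `d` with `|d| ≤ i/2`,
`|((i−d+2)^α − (i+d+1)^α)/((i−d+2)^α + (i+d+1)^α) + α d / i| ≤ C (d² + i)/i²`. -/
theorem stmt5 (α : ℝ) (hα : 0 < α) :
    ∃ C : ℝ, 0 < C ∧ ∀ i : ℕ, 1 ≤ i → ∀ d : ℤ, 2 * |d| ≤ (i : ℤ) →
      |(((i : ℝ) - (d : ℝ) + 2) ^ α - ((i : ℝ) + (d : ℝ) + 1) ^ α)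
          / (((i : ℝ) - (d : ℝ) + 2) ^ α + ((i : ℝ) + (d : ℝ) + 1) ^ α)
        + α * (d : ℝ) / (i : ℝ)|
      ≤ C * ((d : ℝ) ^ 2 + (i : ℝ)) / (i : ℝ) ^ 2 := by
  refine ⟨392*α^2*(12+4*α) + 51*α + 1, by positivity, ?_⟩
  intro i hi d hd
  have hI1 : (1:ℝ) ≤ (i:ℝ) := by exact_mod_cast hi
  have hD : 2 * |(d:ℝ)| ≤ (i:ℝ) := by
    have h := hd
    have : ((2 * |d| : ℤ) : ℝ) ≤ (((i:ℤ)) : ℝ) := by exact_mod_cast h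
    push_cast at this
    exact this
  set I : ℝ := (i:ℝ) with hIdef
  set D : ℝ := (d:ℝ) with hDdef
  have hI0 : (0:ℝ) < I := by linarith
  have hDu : D ≤ I/2 := by have := le_abs_self D; linarith
  have hDl : -(I/2) ≤ D := by have := neg_abs_le D; linarith
  have hx : (0:ℝ) < I - D + 2 := by linarith
  have hy : (0:ℝ) < I + D + 1 := by linarith
  set x : ℝ := I - D + 2 with hxdef
  set y : ℝ := I + D + 1 with hydef
  set z : ℝ := x / y with hzdef
  have hz0 : (0:ℝ) < z := by positivity
  set t : ℝ := α * Real.log z / 2 with htdef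
  -- rewrite the rpow expression
  have hxa : x ^ α = Real.exp (Real.log x * α) := Real.rpow_def_of_pos hx α
  have hya : y ^ α = Real.exp (Real.log y * α) := Real.rpow_def_of_pos hy α
  have hxa0 : (0:ℝ) < x ^ α := Real.rpow_pos_of_pos hx α
  have hya0 : (0:ℝ) < y ^ α := Real.rpow_pos_of_pos hy α
  have hexp2t : Real.exp (2*t) = x ^ α / y ^ α := by
    rw [show 2*t = α * Real.log z from by rw [htdef]; ring, hzdef,
      Real.log_div (ne_of_gt hx) (ne_of_gt hy), hxa, hya, ← Real.exp_sub]
    ring_nf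
  have key : (x ^ α - y ^ α)/(x ^ α + y ^ α)
      = (Real.exp (2*t) - 1)/(Real.exp (2*t) + 1) := by
    rw [hexp2t]
    have hsum : (0:ℝ) < x ^ α + y ^ α := by positivity
    have hsum2 : x ^ α / y ^ α + 1 ≠ 0 := by positivity
    field_simp
  rw [key]
  -- basic bounds on z
  have hz3 : 1/3 ≤ z := by
    rw [hzdef, le_div_iff₀ hy]; nlinarith
  have hz3' : z ≤ 3 := by
    rw [hzdef, div_le_iff₀ hy]; nlinarith
  have hz1 : |z - 1| ≤ 2 := by rw [abs_le]; constructor <;> linarith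
  have hlog := log_aux z hz3
  have hlogabs := abs_le.mp hlog
  have hzm1 : z - 1 = (1 - 2*D)/y := by
    rw [hzdef]; field_simp; rw [hxdef, hydef]; ring
  have hyI : I/2 ≤ y := by rw [hydef]; linarith
  -- bound a: |(z-1) + 2D/I|
  have ha : |(z-1) + 2*D/I| ≤ 6*((D^2+I)/I^2) := by
    have hexpand : (z-1) + 2*D/I = (I + 2*D^2 + 2*D)/(y*I) := by
      rw [hzm1, div_add_div _ _ (ne_of_gt hy) (ne_of_gt hI0), hydef]; ring
    rw [hexpand, abs_div, abs_of_pos (by positivity : (0:ℝ) < y*I)]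
    have hnum : |I + 2*D^2 + 2*D| ≤ 3*(D^2+I) := by
      rw [abs_le]
      constructor
      · nlinarith [sq_nonneg (D+1)]
      · nlinarith [sq_nonneg (D-1)]
    calc |I + 2*D^2 + 2*D|/(y*I) ≤ (3*(D^2+I))/(I^2/2) :=
          div_le_div₀ (by positivity) hnum (by positivity) (by nlinarith)
      _ = 6*((D^2+I)/I^2) := by field_simp; ring
  -- bound b: (z-1)^2
  have hb : (z-1)^2 ≤ 32*((D^2+I)/I^2) := by
    rw [hzm1, div_pow, div_le_iff₀ (by positivity : (0:ℝ) < y^2)]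
    have h1' : (1-2*D)^2 ≤ 8*(D^2+I) := by nlinarith [sq_nonneg (2*D+1)]
    have h2' : I^2/4 ≤ y^2 := by nlinarith
    have h3' : 32*((D^2+I)/I^2) = (32*(D^2+I))/I^2 := by ring
    rw [h3', div_mul_eq_mul_div, le_div_iff₀ (by positivity : (0:ℝ) < I^2)]
    calc (1-2*D)^2 * I^2 ≤ 8*(D^2+I) * I^2 :=
          mul_le_mul_of_nonneg_right h1' (sq_nonneg I)
      _ = 32*(D^2+I) * (I^2/4) := by ring
      _ ≤ 32*(D^2+I) * y^2 :=
          mul_le_mul_of_nonneg_left h2' (by positivity)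
  -- |log z| ≤ 2 hence |t| ≤ α
  have hlzub := Real.log_le_sub_one_of_pos hz0
  have hlzlb := log_lb z hz0
  have hinv3 : 1/z ≤ 3 := by rw [div_le_iff₀ hz0]; nlinarith
  have hlz : |Real.log z| ≤ 2 := by rw [abs_le]; constructor <;> linarith
  have htabs : |t| ≤ α := by
    rw [htdef, abs_div, abs_mul, abs_of_pos hα, abs_two]
    rw [div_le_iff₀ (by norm_num : (0:ℝ) < 2)]
    nlinarith [abs_nonneg (Real.log z)]
  have htanh := tanh_aux t α hα.le htabs
  -- (log z)^2 ≤ 49 (z-1)^2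
  have hlz7 : (Real.log z)^2 ≤ 49*(z-1)^2 := by
    have hsq : (z-1)^2 ≤ 2*|z-1| := by nlinarith [sq_abs (z-1), abs_nonneg (z-1)]
    have h7 : |Real.log z| ≤ 7*|z-1| :=
      calc |Real.log z| = |(Real.log z - (z-1)) + (z-1)| := by ring_nf
        _ ≤ |Real.log z - (z-1)| + |z-1| := abs_add_le _ _
        _ ≤ 7*|z-1| := by linarith
    calc (Real.log z)^2 = |Real.log z|^2 := (sq_abs _).symm
      _ ≤ (7*|z-1|)^2 := by nlinarith [abs_nonneg (Real.log z), abs_nonneg (z-1)]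
      _ = 49*(z-1)^2 := by rw [mul_pow, sq_abs]; norm_num
  -- t^2 bound
  have hw0 : (0:ℝ) ≤ (D^2+I)/I^2 := by positivity
  have ht2 : t^2 ≤ 392*α^2*((D^2+I)/I^2) := by
    have he : t^2 = α^2 * (Real.log z)^2/4 := by rw [htdef]; ring
    rw [he]
    nlinarith [mul_le_mul_of_nonneg_left hlz7 (sq_nonneg α),
      mul_le_mul_of_nonneg_left hb (show (0:ℝ) ≤ 49*α^2 by positivity)]
  -- drift term bound
  have hb2 : |t + α*D/I| ≤ 51*α*((D^2+I)/I^2) := by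
    have hid : t + α*D/I = (α/2) * ((Real.log z - (z-1)) + ((z-1) + 2*D/I)) := by
      rw [htdef]; field_simp; ring
    rw [hid, abs_mul, abs_of_pos (by positivity : (0:ℝ) < α/2)]
    have htri := abs_add_le (Real.log z - (z-1)) ((z-1) + 2*D/I)
    have hsum : |(Real.log z - (z-1)) + ((z-1) + 2*D/I)| ≤ 102*((D^2+I)/I^2) := by
      have h3b : 3*(z-1)^2 ≤ 96*((D^2+I)/I^2) := by linarith
      linarith
    calc α/2 * |(Real.log z - (z-1)) + ((z-1) + 2*D/I)|
        ≤ α/2 * (102*((D^2+I)/I^2)) := mul_le_mul_of_nonneg_left hsum (by positivity)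
      _ = 51*α*((D^2+I)/I^2) := by ring
  -- final triangle inequality
  have hfin := abs_add_le ((Real.exp (2*t) - 1)/(Real.exp (2*t) + 1) - t) (t + α*D/I)
  have hcomb : (Real.exp (2*t) - 1)/(Real.exp (2*t) + 1) - t + (t + α*D/I)
      = (Real.exp (2*t) - 1)/(Real.exp (2*t) + 1) + α*D/I := by ring
  rw [hcomb] at hfin
  have hstep : |(Real.exp (2*t) - 1)/(Real.exp (2*t) + 1) + α*D/I|
      ≤ (392*α^2*(12+4*α) + 51*α)*((D^2+I)/I^2) := by
    have h1 : |(Real.exp (2*t) - 1)/(Real.exp (2*t) + 1) - t|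
        ≤ (12+4*α)*(392*α^2*((D^2+I)/I^2)) := by
      calc |(Real.exp (2*t) - 1)/(Real.exp (2*t) + 1) - t| ≤ (12+4*α)*t^2 := htanh
        _ ≤ (12+4*α)*(392*α^2*((D^2+I)/I^2)) :=
          mul_le_mul_of_nonneg_left ht2 (by linarith)
    have hr : (12+4*α)*(392*α^2*((D^2+I)/I^2)) + 51*α*((D^2+I)/I^2)
        = (392*α^2*(12+4*α) + 51*α)*((D^2+I)/I^2) := by ring
    linarith
  calc |(Real.exp (2*t) - 1)/(Real.exp (2*t) + 1) + α*D/I|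
      ≤ (392*α^2*(12+4*α) + 51*α)*((D^2+I)/I^2) := hstep
    _ ≤ (392*α^2*(12+4*α) + 51*α + 1)*((D^2+I)/I^2) :=
        mul_le_mul_of_nonneg_right (by linarith) hw0
    _ = (392*α^2*(12+4*α) + 51*α + 1) * (D^2+I)/I^2 := by ring
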